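/- (Optimality of the posterior kernel in the E-step.) Let Y and Z be finite nonempty sets, let f : ℝ → ℝ be convex, let ρ : Z × Y → ℝ with ρ(z,y) > 0 for all (z,y), and let p : Y → ℝ with p(y) > 0 for all y. Define the posterior kernel q*(z|y) := ρ(z,y)/ρ_Y(y), where ρ_Y(y) := ∑_z ρ(z,y). Then: (i) D_f(ρ ‖ q*⊗p) = D_f(ρ_Y ‖ p), i.e. ∑_{z,y} q*(z|y)·p(y)·f( ρ(z,y)/(q*(z|y)·p(y)) ) = ∑_y p(y)·f( ρ_Y(y)/p(y) ); and (ii) for every strictly positive kernel q from Y to Z, D_f(ρ ‖ q⊗p) ≥ D_f(ρ ‖ q*⊗p). Hence q* minimizes q ↦ D_f(ρ ‖ q⊗p) over strictly positive kernels. -/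
import Mathlib


open scoped BigOperators

/-- **optimality of the posterior kernel in the E-step.** Let `Y`, `Z` be
finite nonempty sets, `f : ℝ → ℝ` convex, `ρ : Z × Y → ℝ` strictly positive, `p : Y → ℝ`
strictly positive, and let `q*(z|y) := ρ(z,y)/ρ_Y(y)` with `ρ_Y(y) = ∑_z ρ(z,y)` be the
posterior kernel. Then (i) `D_f(ρ ‖ q*⊗p) = D_f(ρ_Y ‖ p)`, and (ii) for every strictly
positive kernel `q` from `Y` to `Z`, `D_f(ρ ‖ q⊗p) ≥ D_f(ρ ‖ q*⊗p)`; hence `q*` minimizes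
`q ↦ D_f(ρ ‖ q⊗p)` over strictly positive kernels. -/
theorem posterior_kernel_optimal
    {Y Z : Type} [Fintype Y] [Nonempty Y] [Fintype Z] [Nonempty Z]
    (f : ℝ → ℝ) (hf : ConvexOn ℝ Set.univ f)
    (ρ : Z × Y → ℝ) (hρ : ∀ z y, 0 < ρ (z, y))
    (p : Y → ℝ) (hp : ∀ y, 0 < p y) :
    (∑ z : Z, ∑ y : Y,
        (ρ (z, y) / ∑ z' : Z, ρ (z', y)) * p y *
          f (ρ (z, y) / ((ρ (z, y) / ∑ z' : Z, ρ (z', y)) * p y))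
      = ∑ y : Y, p y * f ((∑ z : Z, ρ (z, y)) / p y)) ∧
    (∀ q : Y → Z → ℝ, (∀ y z, 0 < q y z) → (∀ y, ∑ z : Z, q y z = 1) →
      ∑ z : Z, ∑ y : Y, q y z * p y * f (ρ (z, y) / (q y z * p y))
        ≥ ∑ z : Z, ∑ y : Y,
            (ρ (z, y) / ∑ z' : Z, ρ (z', y)) * p y *
              f (ρ (z, y) / ((ρ (z, y) / ∑ z' : Z, ρ (z', y)) * p y))) := by
  have hS : ∀ y : Y, 0 < ∑ z' : Z, ρ (z', y) := fun y =>
    Finset.sum_pos (fun z _ => hρ z y) Finset.univ_nonempty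
  -- key simplification of the posterior term
  have key : ∀ y : Y, (∑ z : Z,
      (ρ (z, y) / ∑ z' : Z, ρ (z', y)) * p y *
        f (ρ (z, y) / ((ρ (z, y) / ∑ z' : Z, ρ (z', y)) * p y)))
      = p y * f ((∑ z : Z, ρ (z, y)) / p y) := by
    intro y
    have harg : ∀ z : Z,
        ρ (z, y) / ((ρ (z, y) / ∑ z' : Z, ρ (z', y)) * p y)
          = (∑ z' : Z, ρ (z', y)) / p y := by
      intro z
      field_simp
      rw [mul_div_mul_left _ _ (hρ z y).ne']
    have : (∑ z : Z,
        (ρ (z, y) / ∑ z' : Z, ρ (z', y)) * p y *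
          f (ρ (z, y) / ((ρ (z, y) / ∑ z' : Z, ρ (z', y)) * p y)))
        = ∑ z : Z, ρ (z, y) / (∑ z' : Z, ρ (z', y)) *
            (p y * f ((∑ z' : Z, ρ (z', y)) / p y)) := by
      refine Finset.sum_congr rfl fun z _ => ?_
      rw [harg z]; ring
    rw [this, ← Finset.sum_mul, ← Finset.sum_div, div_self (hS y).ne', one_mul]
  have h1 : (∑ z : Z, ∑ y : Y,
      (ρ (z, y) / ∑ z' : Z, ρ (z', y)) * p y *
        f (ρ (z, y) / ((ρ (z, y) / ∑ z' : Z, ρ (z', y)) * p y)))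
      = ∑ y : Y, p y * f ((∑ z : Z, ρ (z, y)) / p y) := by
    rw [Finset.sum_comm]
    exact Finset.sum_congr rfl fun y _ => key y
  refine ⟨h1, fun q hq hq1 => ?_⟩
  rw [h1, Finset.sum_comm]
  refine Finset.sum_le_sum fun y _ => ?_
  -- Jensen for fixed y
  have hjen : f (∑ z : Z, q y z • (ρ (z, y) / (q y z * p y)))
      ≤ ∑ z : Z, q y z • f (ρ (z, y) / (q y z * p y)) :=
    hf.map_sum_le (fun z _ => (hq y z).le) (hq1 y) (fun z _ => Set.mem_univ _)
  have harg : (∑ z : Z, q y z • (ρ (z, y) / (q y z * p y)))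
      = (∑ z : Z, ρ (z, y)) / p y := by
    simp only [smul_eq_mul]
    have : ∀ z : Z, q y z * (ρ (z, y) / (q y z * p y)) = ρ (z, y) / p y := by
      intro z
      field_simp
      rw [mul_div_mul_left _ _ (hq y z).ne']
    rw [Finset.sum_congr rfl fun z _ => this z, ← Finset.sum_div]
  rw [harg] at hjen
  calc p y * f ((∑ z : Z, ρ (z, y)) / p y)
      ≤ p y * ∑ z : Z, q y z * f (ρ (z, y) / (q y z * p y)) := by
        exact mul_le_mul_of_nonneg_left hjen (hp y).le
    _ = ∑ z : Z, q y z * p y * f (ρ (z, y) / (q y z * p y)) := by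
        rw [Finset.mul_sum]; exact Finset.sum_congr rfl fun z _ => by ring
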